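/- There exists an absolute constant C > 0 such that for every integer c ≥ 2, every real ε with 0 < ε < 1, and with k = ⌈C·(c·ln c)/ε²⌉, the following holds for every simple graph G on a finite vertex set V with |V| = n ≥ k: (1) if G is c-colorable, then for every subset π ⊆ V of size k the induced subgraph G[π] is c-colorable; (2) if every simple graph G' on V whose edge set differs from that of G in at most ε·n² edges fails to be c-colorable, then for a subset π ⊆ V of size k chosen uniformly at random, the induced subgraph G[π] is not c-colorable with probability at least 2/3. -/

import Mathlib

set_option linter.unusedSectionVars false

open scoped Classical

namespace AK

variable {V : Type} [Fintype V] [DecidableEq V] [LinearOrder V]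

noncomputable def heavy (G : SimpleGraph V) {c : ℕ} (σ : V → Finset (Fin c)) (u : V) (j : Fin c) : ℕ :=
  (Finset.univ.filter (fun w => G.Adj u w ∧ j ∈ σ w)).card

noncomputable def Rset (G : SimpleGraph V) {c : ℕ} (h : ℕ) (σ : V → Finset (Fin c)) : Finset V :=
  Finset.univ.filter (fun v => σ v = ∅ ∨ ∀ j ∈ σ v, h ≤ heavy G σ v j)

lemma mem_Rset {G : SimpleGraph V} {c h : ℕ} {σ : V → Finset (Fin c)} {v : V} :
    v ∈ Rset G h σ ↔ (σ v = ∅ ∨ ∀ j ∈ σ v, h ≤ heavy G σ v j) := by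
  simp [Rset]

noncomputable def Phi {c : ℕ} (σ : V → Finset (Fin c)) : ℕ := ∑ v, (σ v).card

lemma heavy_le_phi {G : SimpleGraph V} {c : ℕ} {σ : V → Finset (Fin c)} {u : V} {j : Fin c} :
    heavy G σ u j ≤ Phi σ := by
  classical
  have h1 : heavy G σ u j = ∑ w ∈ Finset.univ.filter (fun w => G.Adj u w ∧ j ∈ σ w), 1 := by
    simp [heavy]
  rw [h1, Phi]
  calc ∑ w ∈ Finset.univ.filter (fun w => G.Adj u w ∧ j ∈ σ w), 1
      ≤ ∑ w ∈ Finset.univ.filter (fun w => G.Adj u w ∧ j ∈ σ w), (σ w).card :=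
        Finset.sum_le_sum (fun w hw => Finset.card_pos.2 ⟨j, (Finset.mem_filter.1 hw).2.2⟩)
    _ ≤ ∑ w, (σ w).card := Finset.sum_le_sum_of_subset (Finset.filter_subset _ _)

noncomputable def upd (G : SimpleGraph V) {c : ℕ} (σ : V → Finset (Fin c)) (u : V) (j : Fin c) :
    V → Finset (Fin c) :=
  fun w => if w = u then {j} else if G.Adj u w then (σ w).erase j else σ w

lemma phi_upd {G : SimpleGraph V} {c h : ℕ} {σ : V → Finset (Fin c)} {u : V} {j : Fin c}
    (hu : u ∈ Rset G h σ) (hj : j ∈ σ u) : Phi (upd G σ u j) + h ≤ Phi σ := by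
  classical
  set N := Finset.univ.filter (fun w => G.Adj u w ∧ j ∈ σ w) with hN
  have hh : h ≤ N.card := by
    rcases mem_Rset.1 hu with h0 | h1
    · exact absurd hj (by simp [h0])
    · exact h1 j hj
  have key : ∀ w : V, (upd G σ u j w).card + (if w ∈ N then 1 else 0) ≤ (σ w).card := by
    intro w
    by_cases hw : w = u
    · subst hw
      have hwN : w ∉ N := by simp [hN, G.irrefl]
      simp only [hwN, if_false, add_zero, upd, if_pos rfl, Finset.card_singleton]
      exact Finset.card_pos.2 ⟨j, hj⟩
    · by_cases hwN : w ∈ N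
      · have hadj : G.Adj u w ∧ j ∈ σ w := by
          have := hwN; rw [hN, Finset.mem_filter] at this; exact this.2
        simp only [upd, if_neg hw, if_pos hadj.1, if_pos hwN]
        have := Finset.card_erase_add_one hadj.2
        omega
      · simp only [upd, if_neg hw, if_neg hwN, add_zero]
        by_cases hadj : G.Adj u w
        · simp only [if_pos hadj]; exact Finset.card_erase_le
        · simp only [if_neg hadj]; exact le_rfl
  have hbool : (∑ w, if w ∈ N then (1:ℕ) else 0) = N.card := by
    rw [Finset.sum_ite_mem]; simp
  have hsum : Phi (upd G σ u j) + N.card ≤ Phi σ := by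
    have h2 := Finset.sum_le_sum (fun w (_ : w ∈ Finset.univ) => key w)
    rw [Finset.sum_add_distrib, hbool] at h2
    exact h2
  omega

structure St (V : Type) (c : ℕ) where
  sig : V → Finset (Fin c)
  samp : Finset V
  uncons : Finset V
  cnt : ℕ
  dead : Bool

def mkDead {c : ℕ} (s : St V c) : St V c := { s with dead := true }

noncomputable def consume (G : SimpleGraph V) {c : ℕ} (s : St V c) (u : V) (j : Fin c) : St V c :=
  { sig := upd G s.sig u j, samp := s.samp, uncons := s.uncons.erase u,
    cnt := s.cnt + 1, dead := false }

noncomputable def cascade (G : SimpleGraph V) {c : ℕ} (h r : ℕ) (g : ℕ → Fin c) (s : St V c) :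
    St V c :=
  if hT : s.dead = false ∧ (s.uncons ∩ Rset G h s.sig).Nonempty then
    if s.cnt < r ∧ g s.cnt ∈ s.sig ((s.uncons ∩ Rset G h s.sig).min' hT.2) then
      cascade G h r g (consume G s ((s.uncons ∩ Rset G h s.sig).min' hT.2) (g s.cnt))
    else mkDead s
  else s
termination_by s.uncons.card
decreasing_by
  simp only [consume]
  exact Finset.card_erase_lt_of_mem (Finset.mem_inter.1 (Finset.min'_mem _ hT.2)).1

noncomputable def step (G : SimpleGraph V) {c : ℕ} (h r : ℕ) (g : ℕ → Fin c) (s : St V c) (v : V) :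
    St V c :=
  if s.dead = true ∨ v ∈ s.samp then mkDead s
  else cascade G h r g { s with samp := insert v s.samp, uncons := insert v s.uncons }

noncomputable def runL (G : SimpleGraph V) {c : ℕ} (h r : ℕ) (g : ℕ → Fin c) (s : St V c)
    (L : List V) : St V c :=
  L.foldl (step G h r g) s

noncomputable def Wt (G : SimpleGraph V) {c : ℕ} (h r : ℕ) (g : ℕ → Fin c) : ℕ → St V c → ℝ
  | 0, s => if s.dead = true then 0 else 1
  | (t+1), s => ∑ v, (if v ∈ Rset G h s.sig then (1/2 : ℝ) else 1) * Wt G h r g t (step G h r g s v)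


lemma cascade_eq (G : SimpleGraph V) {c : ℕ} (h r : ℕ) (g : ℕ → Fin c) (s : St V c) :
    cascade G h r g s =
    if hT : s.dead = false ∧ (s.uncons ∩ Rset G h s.sig).Nonempty then
      if s.cnt < r ∧ g s.cnt ∈ s.sig ((s.uncons ∩ Rset G h s.sig).min' hT.2) then
        cascade G h r g (consume G s ((s.uncons ∩ Rset G h s.sig).min' hT.2) (g s.cnt))
      else mkDead s
    else s := by
  rw [cascade]

lemma cascade_dead (G : SimpleGraph V) {c : ℕ} (h r : ℕ) (g : ℕ → Fin c) (s : St V c)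
    (hs : s.dead = true) : cascade G h r g s = s := by
  rw [cascade_eq, dif_neg]
  simp [hs]

lemma cascade_samp (G : SimpleGraph V) {c : ℕ} (h r : ℕ) (g : ℕ → Fin c) (s : St V c) :
    (cascade G h r g s).samp = s.samp := by
  induction s using cascade.induct G h r g with
  | case1 s hT hc ih =>
      rw [cascade_eq, dif_pos hT, if_pos hc]
      rw [ih]; rfl
  | case2 s hT hc =>
      rw [cascade_eq, dif_pos hT, if_neg hc]; rfl
  | case3 s hT =>
      rw [cascade_eq, dif_neg hT]

lemma cascade_cnt_mono (G : SimpleGraph V) {c : ℕ} (h r : ℕ) (g : ℕ → Fin c) (s : St V c) :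
    s.cnt ≤ (cascade G h r g s).cnt := by
  induction s using cascade.induct G h r g with
  | case1 s hT hc ih =>
      rw [cascade_eq, dif_pos hT, if_pos hc]
      refine le_trans ?_ ih
      simp [consume]
  | case2 s hT hc =>
      rw [cascade_eq, dif_pos hT, if_neg hc]; exact le_rfl
  | case3 s hT =>
      rw [cascade_eq, dif_neg hT]

def Inv0 (G : SimpleGraph V) {c : ℕ} (h : ℕ) (s : St V c) : Prop :=
  s.dead = false → (s.uncons ⊆ s.samp ∧ s.samp.card = s.uncons.card + s.cnt ∧
    Phi s.sig + h * s.cnt ≤ c * Fintype.card V)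

def InvF (G : SimpleGraph V) {c : ℕ} (h : ℕ) (s : St V c) : Prop :=
  Inv0 G h s ∧ (s.dead = false → s.uncons ∩ Rset G h s.sig = ∅)

lemma consume_inv0 (G : SimpleGraph V) {c : ℕ} (h : ℕ) (s : St V c) (u : V) (j : Fin c)
    (hd : s.dead = false) (hI : Inv0 G h s) (hu : u ∈ s.uncons) (hR : u ∈ Rset G h s.sig)
    (hj : j ∈ s.sig u) : Inv0 G h (consume G s u j) := by
  intro _
  obtain ⟨h1, h2, h3⟩ := hI hd
  refine ⟨?_, ?_, ?_⟩
  · exact le_trans (Finset.erase_subset _ _) h1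
  · show s.samp.card = (s.uncons.erase u).card + (s.cnt + 1)
    rw [Finset.card_erase_of_mem hu]
    have : 1 ≤ s.uncons.card := Finset.card_pos.2 ⟨u, hu⟩
    omega
  · show Phi (upd G s.sig u j) + h * (s.cnt + 1) ≤ c * Fintype.card V
    have hp := phi_upd hR hj
    have : h * (s.cnt + 1) = h * s.cnt + h := by ring
    omega

lemma cascade_invF (G : SimpleGraph V) {c : ℕ} (h r : ℕ) (g : ℕ → Fin c) (s : St V c)
    (hI : Inv0 G h s) : InvF G h (cascade G h r g s) := by
  induction s using cascade.induct G h r g with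
  | case1 s hT hc ih =>
      rw [cascade_eq, dif_pos hT, if_pos hc]
      refine ih ?_
      exact consume_inv0 G h s _ _ hT.1 hI
        (Finset.mem_inter.1 (Finset.min'_mem _ hT.2)).1
        (Finset.mem_inter.1 (Finset.min'_mem _ hT.2)).2 hc.2
  | case2 s hT hc =>
      rw [cascade_eq, dif_pos hT, if_neg hc]
      constructor <;> intro hd <;> simp [mkDead] at hd
  | case3 s hT =>
      rw [cascade_eq, dif_neg hT]
      refine ⟨hI, fun hd => ?_⟩
      rw [not_and] at hT
      exact Finset.not_nonempty_iff_eq_empty.1 (hT hd)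

lemma cascade_progress (G : SimpleGraph V) {c : ℕ} (h r : ℕ) (g : ℕ → Fin c) (s : St V c)
    (hT : s.dead = false ∧ (s.uncons ∩ Rset G h s.sig).Nonempty) :
    (cascade G h r g s).dead = true ∨ s.cnt < (cascade G h r g s).cnt := by
  rw [cascade_eq, dif_pos hT]
  split
  · right
    have h1 := cascade_cnt_mono G h r g
      (consume G s ((s.uncons ∩ Rset G h s.sig).min' hT.2) (g s.cnt))
    have h2 : (consume G s ((s.uncons ∩ Rset G h s.sig).min' hT.2) (g s.cnt)).cnt = s.cnt + 1 := rfl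
    omega
  · left; rfl

lemma step_dead (G : SimpleGraph V) {c : ℕ} (h r : ℕ) (g : ℕ → Fin c) (s : St V c) (v : V)
    (hs : s.dead = true) : (step G h r g s v).dead = true := by
  rw [step, if_pos (Or.inl hs)]
  rfl

lemma step_cnt (G : SimpleGraph V) {c : ℕ} (h r : ℕ) (g : ℕ → Fin c) (s : St V c) (v : V) :
    s.cnt ≤ (step G h r g s v).cnt := by
  rw [step]
  split
  · exact le_rfl
  · exact cascade_cnt_mono G h r g { s with samp := insert v s.samp, uncons := insert v s.uncons }

lemma step_samp_alive (G : SimpleGraph V) {c : ℕ} (h r : ℕ) (g : ℕ → Fin c) (s : St V c) (v : V)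
    (hd : s.dead = false) (hv : v ∉ s.samp) : (step G h r g s v).samp = insert v s.samp := by
  rw [step, if_neg (by simp [hd, hv])]
  rw [cascade_samp]

lemma step_invF (G : SimpleGraph V) {c : ℕ} (h r : ℕ) (g : ℕ → Fin c) (s : St V c) (v : V)
    (hI : InvF G h s) : InvF G h (step G h r g s v) := by
  rw [step]
  split
  · constructor <;> intro hd <;> simp [mkDead] at hd
  · rename_i hcond
    rw [not_or] at hcond
    have hd : s.dead = false := by
      cases hb : s.dead
      · rfl
      · exact absurd hb hcond.1
    have hv : v ∉ s.samp := hcond.2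
    apply cascade_invF
    intro _
    obtain ⟨h1, h2, h3⟩ := hI.1 hd
    have hvu : v ∉ s.uncons := fun hmem => hv (h1 hmem)
    refine ⟨?_, ?_, ?_⟩
    · exact Finset.insert_subset_insert v h1
    · show (insert v s.samp).card = (insert v s.uncons).card + s.cnt
      rw [Finset.card_insert_of_notMem hv, Finset.card_insert_of_notMem hvu]
      omega
    · exact h3

lemma step_progress (G : SimpleGraph V) {c : ℕ} (h r : ℕ) (g : ℕ → Fin c) (s : St V c) (v : V)
    (hd : s.dead = false) (hv : v ∉ s.samp) (hR : v ∈ Rset G h s.sig) :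
    (step G h r g s v).dead = true ∨ s.cnt < (step G h r g s v).cnt := by
  rw [step, if_neg (by simp [hd, hv])]
  exact cascade_progress G h r g _ ⟨hd, ⟨v, Finset.mem_inter.2 ⟨Finset.mem_insert_self _ _, hR⟩⟩⟩

lemma runL_cons (G : SimpleGraph V) {c : ℕ} (h r : ℕ) (g : ℕ → Fin c) (s : St V c) (v : V)
    (L : List V) : runL G h r g s (v :: L) = runL G h r g (step G h r g s v) L := rfl

lemma run_dead (G : SimpleGraph V) {c : ℕ} (h r : ℕ) (g : ℕ → Fin c) (L : List V) :
    ∀ (s : St V c), s.dead = true → (runL G h r g s L).dead = true := by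
  induction L with
  | nil => intro s hs; exact hs
  | cons v L ih =>
      intro s hs
      rw [runL_cons]
      exact ih _ (step_dead G h r g s v hs)

lemma run_cnt (G : SimpleGraph V) {c : ℕ} (h r : ℕ) (g : ℕ → Fin c) (L : List V) :
    ∀ (s : St V c), s.cnt ≤ (runL G h r g s L).cnt := by
  induction L with
  | nil => intro s; exact le_rfl
  | cons v L ih =>
      intro s
      rw [runL_cons]
      exact le_trans (step_cnt G h r g s v) (ih _)

lemma run_invF (G : SimpleGraph V) {c : ℕ} (h r : ℕ) (g : ℕ → Fin c) (L : List V) :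
    ∀ (s : St V c), InvF G h s → InvF G h (runL G h r g s L) := by
  induction L with
  | nil => intro s hs; exact hs
  | cons v L ih =>
      intro s hs
      rw [runL_cons]
      exact ih _ (step_invF G h r g s v hs)

lemma wt_nonneg (G : SimpleGraph V) {c : ℕ} (h r : ℕ) (g : ℕ → Fin c) (t : ℕ) :
    ∀ s : St V c, 0 ≤ Wt G h r g t s := by
  induction t with
  | zero => intro s; rw [Wt]; split <;> norm_num
  | succ t ih =>
      intro s
      rw [Wt]
      apply Finset.sum_nonneg
      intro v _
      apply mul_nonneg _ (ih _)
      split <;> norm_num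

lemma wt_dead (G : SimpleGraph V) {c : ℕ} (h r : ℕ) (g : ℕ → Fin c) (t : ℕ) :
    ∀ s : St V c, s.dead = true → Wt G h r g t s = 0 := by
  induction t with
  | zero => intro s hs; rw [Wt]; simp [hs]
  | succ t ih =>
      intro s hs
      rw [Wt]
      apply Finset.sum_eq_zero
      intro v _
      rw [ih _ (step_dead G h r g s v hs), mul_zero]

lemma cascade_agree (G : SimpleGraph V) {c : ℕ} (h r : ℕ) (g' : ℕ → Fin c) (s : St V c) :
    ∀ g : ℕ → Fin c, (∀ m, s.cnt ≤ m → m < (cascade G h r g' s).cnt → g m = g' m) →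
    (cascade G h r g' s).dead = false → cascade G h r g s = cascade G h r g' s := by
  induction s using cascade.induct G h r g' with
  | case1 s hT hc ih =>
      intro g hag hsurv
      have hcc : cascade G h r g' s =
          cascade G h r g' (consume G s ((s.uncons ∩ Rset G h s.sig).min' hT.2) (g' s.cnt)) := by
        rw [cascade_eq, dif_pos hT, if_pos hc]
      have hcnt : s.cnt < (cascade G h r g' s).cnt := by
        rw [hcc]
        have h1 := cascade_cnt_mono G h r g'
          (consume G s ((s.uncons ∩ Rset G h s.sig).min' hT.2) (g' s.cnt))
        have h2 : (consume G s ((s.uncons ∩ Rset G h s.sig).min' hT.2) (g' s.cnt)).cnt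
            = s.cnt + 1 := rfl
        omega
      have hgg : g s.cnt = g' s.cnt := hag s.cnt le_rfl hcnt
      rw [cascade_eq (g := g), dif_pos hT, if_pos (by rw [hgg]; exact hc), hgg]
      rw [hcc]
      apply ih
      · intro m hm1 hm2
        refine hag m ?_ ?_
        · have : (consume G s ((s.uncons ∩ Rset G h s.sig).min' hT.2) (g' s.cnt)).cnt
              = s.cnt + 1 := rfl
          omega
        · rw [hcc]; exact hm2
      · rw [← hcc]; exact hsurv
  | case2 s hT hc =>
      intro g hag hsurv
      exfalso
      rw [cascade_eq, dif_pos hT, if_neg hc] at hsurv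
      simp [mkDead] at hsurv
  | case3 s hT =>
      intro g hag hsurv
      rw [cascade_eq, dif_neg hT, cascade_eq, dif_neg hT]

lemma run_agree (G : SimpleGraph V) {c : ℕ} (h r : ℕ) (L : List V) :
    ∀ (s : St V c) (g g' : ℕ → Fin c),
    (∀ m, s.cnt ≤ m → m < (runL G h r g' s L).cnt → g m = g' m) →
    (runL G h r g' s L).dead = false → runL G h r g s L = runL G h r g' s L := by
  induction L with
  | nil => intro s g g' _ _; rfl
  | cons v L ih =>
      intro s g g' hag hsurv
      rw [runL_cons] at hsurv hag ⊢
      rw [runL_cons]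
      have hstep_surv : (step G h r g' s v).dead = false := by
        cases hb : (step G h r g' s v).dead
        · rfl
        · rw [run_dead G h r g' L _ hb] at hsurv; exact absurd hsurv (by simp)
      have hstep_eq : step G h r g s v = step G h r g' s v := by
        by_cases hcond : s.dead = true ∨ v ∈ s.samp
        · rw [step, step, if_pos hcond, if_pos hcond]
        · have hdef : cascade G h r g'
              { s with samp := insert v s.samp, uncons := insert v s.uncons }
              = step G h r g' s v := by
            rw [step, if_neg hcond]
          rw [step, step, if_neg hcond, if_neg hcond]
          apply cascade_agree
          · intro m hm1 hm2
            rw [hdef] at hm2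
            exact hag m hm1 (lt_of_lt_of_le hm2 (run_cnt G h r g' L _))
          · rw [hdef]; exact hstep_surv
      rw [hstep_eq]
      exact ih _ g g' (fun m hm1 hm2 => hag m (le_trans (step_cnt G h r g' s v) hm1) hm2) hsurv

end AK

namespace AK
variable {V : Type} [Fintype V] [DecidableEq V] [LinearOrder V]

lemma cnt_le_r {G : SimpleGraph V} {c : ℕ} {h r : ℕ} (hh : 0 < h)
    (hrr : c * Fintype.card V ≤ h * r) {s : St V c} (hI : Inv0 G h s)
    (hd : s.dead = false) : s.cnt ≤ r := by
  have h3 := (hI hd).2.2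
  have : h * s.cnt ≤ h * r := by omega
  exact Nat.le_of_mul_le_mul_left this hh

lemma wt_bound (G : SimpleGraph V) {c : ℕ} (h r : ℕ) (p : ℝ) (hp0 : 0 ≤ p) (hp1 : p ≤ 1)
    (hh : 0 < h) (hrr : c * Fintype.card V ≤ h * r)
    (hRbig : ∀ σ : V → Finset (Fin c),
      (r : ℝ) + 2 * p * (Fintype.card V : ℝ) ≤ ((Rset G h σ).card : ℝ))
    (g : ℕ → Fin c) (t : ℕ) :
    ∀ s : St V c, InvF G h s →
      Wt G h r g t s ≤ (1 - p) ^ t * ((Fintype.card V - s.samp.card).descFactorial t : ℝ) := by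
  have hp1' : (0:ℝ) ≤ 1 - p := by linarith
  induction t with
  | zero =>
      intro s _
      rw [Wt, pow_zero, Nat.descFactorial_zero, Nat.cast_one, one_mul]
      split <;> norm_num
  | succ t ih =>
      intro s hI
      rw [Wt]
      by_cases hd : s.dead = true
      · rw [Finset.sum_eq_zero (fun v _ => by
          rw [wt_dead G h r g t _ (step_dead G h r g s v hd), mul_zero])]
        positivity
      · have hd' : s.dead = false := by simpa using hd
        obtain ⟨h1, h2, h3⟩ := hI.1 hd'
        have hsampn : s.samp.card ≤ Fintype.card V := by
          rw [← Finset.card_univ]; exact Finset.card_le_card (Finset.subset_univ _)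
        set n := Fintype.card V with hn
        set A := n - s.samp.card with hA
        -- sum over samp vanishes
        have hzero : ∀ v ∈ s.samp,
            (if v ∈ Rset G h s.sig then (1/2:ℝ) else 1) * Wt G h r g t (step G h r g s v) = 0 := by
          intro v hv
          have : (step G h r g s v).dead = true := by
            rw [step, if_pos (Or.inr hv)]; rfl
          rw [wt_dead G h r g t _ this, mul_zero]
        have hsplit := Finset.sum_sdiff (f := fun v =>
          (if v ∈ Rset G h s.sig then (1/2:ℝ) else 1) * Wt G h r g t (step G h r g s v))
          (Finset.subset_univ s.samp)
        rw [← hsplit, Finset.sum_eq_zero hzero, add_zero]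
        by_cases hA0 : A = 0
        · have : s.samp = Finset.univ := by
            apply Finset.eq_univ_of_card; omega
          rw [this, Finset.sdiff_self, Finset.sum_empty]
          positivity
        -- per-term bound
        have hterm : ∀ v ∈ Finset.univ \ s.samp,
            Wt G h r g t (step G h r g s v) ≤ (1 - p)^t * ((A - 1).descFactorial t : ℝ) := by
          intro v hv
          rw [Finset.mem_sdiff] at hv
          by_cases hdv : (step G h r g s v).dead = true
          · rw [wt_dead G h r g t _ hdv]; positivity
          · have hIv : InvF G h (step G h r g s v) := step_invF G h r g s v hI
            have := ih (step G h r g s v) hIv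
            rw [step_samp_alive G h r g s v hd' hv.2, Finset.card_insert_of_notMem hv.2] at this
            have heq : n - (s.samp.card + 1) = A - 1 := by omega
            rw [heq] at this
            exact this
        -- weight sum bound
        have hsampR : (s.samp ∩ Rset G h s.sig).card ≤ s.cnt := by
          have hsub : s.samp ∩ Rset G h s.sig ⊆ s.samp \ s.uncons := by
            intro x hx
            rw [Finset.mem_inter] at hx
            rw [Finset.mem_sdiff]
            refine ⟨hx.1, fun hxu => ?_⟩
            have he := hI.2 hd'
            have hx2 : x ∈ s.uncons ∩ Rset G h s.sig := Finset.mem_inter.2 ⟨hxu, hx.2⟩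
            rw [he] at hx2
            exact absurd hx2 (Finset.notMem_empty x)
          calc (s.samp ∩ Rset G h s.sig).card ≤ (s.samp \ s.uncons).card :=
                Finset.card_le_card hsub
            _ = s.samp.card - s.uncons.card := Finset.card_sdiff_of_subset h1
            _ ≤ s.cnt := by omega
        have hcntr : s.cnt ≤ r := cnt_le_r hh hrr hI.1 hd'
        have hRcard : 2 * p * (A:ℝ) ≤ (((Finset.univ \ s.samp) ∩ Rset G h s.sig).card : ℝ) := by
          have e1 : (Finset.univ \ s.samp) ∩ Rset G h s.sig
              = Rset G h s.sig \ (s.samp ∩ Rset G h s.sig) := by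
            ext x; simp [Finset.mem_sdiff, Finset.mem_inter]; tauto
          rw [e1, Finset.card_sdiff_of_subset (Finset.inter_subset_right)]
          have hle : (s.samp ∩ Rset G h s.sig).card ≤ (Rset G h s.sig).card :=
            Finset.card_le_card Finset.inter_subset_right
          have := hRbig s.sig
          have hAn : (A:ℝ) ≤ (n:ℝ) := by
            have : A ≤ n := by omega
            exact_mod_cast this
          have hc1 : ((s.samp ∩ Rset G h s.sig).card : ℝ) ≤ (r:ℝ) := by
            exact_mod_cast le_trans hsampR hcntr
          have hcast : (((Rset G h s.sig).card - (s.samp ∩ Rset G h s.sig).card : ℕ) : ℝ)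
              = ((Rset G h s.sig).card : ℝ) - ((s.samp ∩ Rset G h s.sig).card : ℝ) :=
            Nat.cast_sub hle
          rw [hcast]
          nlinarith [hRbig s.sig, hc1, hAn, hp0]
        -- now combine
        have hwsum : ∑ v ∈ Finset.univ \ s.samp,
            (if v ∈ Rset G h s.sig then (1/2:ℝ) else 1) ≤ (1 - p) * (A : ℝ) := by
          have hsplit2 := Finset.sum_filter_add_sum_filter_not (Finset.univ \ s.samp)
            (fun v => v ∈ Rset G h s.sig)
            (fun v => (if v ∈ Rset G h s.sig then (1/2:ℝ) else 1))
          have e2 : (Finset.univ \ s.samp).filter (fun v => v ∈ Rset G h s.sig)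
              = (Finset.univ \ s.samp) ∩ Rset G h s.sig := by
            ext x; simp [Finset.mem_filter, Finset.mem_inter]
          have hcardA : ((Finset.univ \ s.samp).card : ℝ) = (A:ℝ) := by
            rw [Finset.card_sdiff_of_subset (Finset.subset_univ _), Finset.card_univ]
          set B := (Finset.univ \ s.samp) ∩ Rset G h s.sig with hB
          have hBsub : B.card ≤ (Finset.univ \ s.samp).card :=
            Finset.card_le_card Finset.inter_subset_left
          have hv1 : ∑ v ∈ (Finset.univ \ s.samp).filter (fun v => v ∈ Rset G h s.sig),
              (if v ∈ Rset G h s.sig then (1/2:ℝ) else 1) = (1/2:ℝ) * B.card := by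
            rw [e2]
            rw [Finset.sum_congr rfl (fun x hx => if_pos (by
              rw [hB] at hx; exact (Finset.mem_inter.1 hx).2))]
            rw [Finset.sum_const, nsmul_eq_mul]
            ring
          have hcard2 : ((Finset.univ \ s.samp).filter (fun v => ¬ v ∈ Rset G h s.sig)).card
              = (Finset.univ \ s.samp).card - B.card := by
            rw [← e2, Finset.filter_not, Finset.card_sdiff_of_subset (Finset.filter_subset _ _)]
          have hv2 : ∑ v ∈ (Finset.univ \ s.samp).filter (fun v => ¬ v ∈ Rset G h s.sig),
              (if v ∈ Rset G h s.sig then (1/2:ℝ) else 1)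
              = (((Finset.univ \ s.samp).card : ℝ) - B.card) := by
            rw [Finset.sum_congr rfl (fun x hx => if_neg (Finset.mem_filter.1 hx).2)]
            rw [Finset.sum_const, nsmul_eq_mul, mul_one, hcard2]
            exact Nat.cast_sub hBsub
          rw [← hsplit2, hv1, hv2, hcardA]
          linarith [hRcard]
        calc ∑ v ∈ Finset.univ \ s.samp,
              (if v ∈ Rset G h s.sig then (1/2:ℝ) else 1) * Wt G h r g t (step G h r g s v)
            ≤ ∑ v ∈ Finset.univ \ s.samp,
              (if v ∈ Rset G h s.sig then (1/2:ℝ) else 1)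
                * ((1 - p)^t * ((A - 1).descFactorial t : ℝ)) := by
              apply Finset.sum_le_sum
              intro v hv
              apply mul_le_mul_of_nonneg_left (hterm v hv)
              split <;> norm_num
          _ = (∑ v ∈ Finset.univ \ s.samp,
              (if v ∈ Rset G h s.sig then (1/2:ℝ) else 1))
                * ((1 - p)^t * ((A - 1).descFactorial t : ℝ)) := by
              rw [Finset.sum_mul]
          _ ≤ ((1 - p) * (A : ℝ)) * ((1 - p)^t * ((A - 1).descFactorial t : ℝ)) := by
              apply mul_le_mul_of_nonneg_right hwsum
              positivity
          _ = (1 - p)^(t+1) * ((A:ℝ) * ((A - 1).descFactorial t : ℝ)) := by ring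
          _ = (1 - p)^(t+1) * (A.descFactorial (t+1) : ℝ) := by
              obtain ⟨B, hB2⟩ : ∃ B, A = B + 1 := ⟨A - 1, by omega⟩
              rw [hB2, Nat.succ_descFactorial_succ]
              simp only [Nat.add_sub_cancel]
              push_cast
              ring

lemma count_le_wt (G : SimpleGraph V) {c : ℕ} (h r : ℕ) (hh : 0 < h)
    (hrr : c * Fintype.card V ≤ h * r) (g : ℕ → Fin c) (t : ℕ) :
    ∀ s : St V c, InvF G h s →
    (((Finset.univ : Finset (Fin t → V)).filter
        (fun f => (runL G h r g s (List.ofFn f)).dead = false)).card : ℝ)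
      ≤ (2:ℝ) ^ ((r : ℤ) - s.cnt) * Wt G h r g t s := by
  induction t with
  | zero =>
      intro s hI
      by_cases hd : s.dead = true
      · have he : (Finset.univ : Finset (Fin 0 → V)).filter
            (fun f => (runL G h r g s (List.ofFn f)).dead = false) = ∅ := by
          apply Finset.filter_false_of_mem
          intro f _
          rw [List.ofFn_zero]
          show ¬ s.dead = false
          rw [hd]; simp
        rw [he, Wt, if_pos hd]
        simp
      · have hd' : s.dead = false := by simpa using hd
        have hcnt : s.cnt ≤ r := cnt_le_r hh hrr hI.1 hd'
        rw [Wt, if_neg hd, mul_one]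
        calc (((Finset.univ : Finset (Fin 0 → V)).filter _).card : ℝ)
            ≤ ((Finset.univ : Finset (Fin 0 → V)).card : ℝ) := by
              exact_mod_cast Finset.card_le_card (Finset.filter_subset _ _)
          _ = 1 := by
              rw [Finset.card_univ]
              simp
          _ ≤ (2:ℝ) ^ ((r : ℤ) - s.cnt) := by
              have h0 : (0:ℤ) ≤ (r : ℤ) - s.cnt := by
                have : (s.cnt : ℤ) ≤ r := by exact_mod_cast hcnt
                omega
              calc (1:ℝ) = (2:ℝ) ^ (0:ℤ) := by norm_num
                _ ≤ (2:ℝ) ^ ((r : ℤ) - s.cnt) := by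
                    apply zpow_le_zpow_right₀ (by norm_num) h0
  | succ t ih =>
      intro s hI
      -- decompose the function space
      have hdecomp : (((Finset.univ : Finset (Fin (t+1) → V)).filter
          (fun f => (runL G h r g s (List.ofFn f)).dead = false)).card : ℕ)
          = ∑ v : V, ((Finset.univ : Finset (Fin t → V)).filter
              (fun f' => (runL G h r g (step G h r g s v) (List.ofFn f')).dead = false)).card := by
        rw [Finset.card_filter]
        rw [← Equiv.sum_comp (Fin.consEquiv (fun _ => V))
          (fun f : Fin (t+1) → V => if (runL G h r g s (List.ofFn f)).dead = false then 1 else 0)]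
        rw [Fintype.sum_prod_type]
        congr 1
        ext v
        rw [Finset.card_filter]
        congr 1
        ext f'
        congr 1
        have hofn : List.ofFn ((Fin.consEquiv (fun _ => V)) (v, f')) = v :: List.ofFn f' := by
          rw [List.ofFn_succ]
          have h0 : (Fin.consEquiv (fun _ => V)) (v, f') 0 = v := by
            simp [Fin.consEquiv]
          have hs : (fun i : Fin t => (Fin.consEquiv (fun _ => V)) (v, f') i.succ) = f' := by
            funext i
            simp [Fin.consEquiv]
          rw [h0, hs]
        rw [hofn, runL_cons]
      rw [hdecomp]
      push_cast
      have hstepb : ∀ v : V,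
          (((Finset.univ : Finset (Fin t → V)).filter
            (fun f' => (runL G h r g (step G h r g s v) (List.ofFn f')).dead = false)).card : ℝ)
          ≤ (2:ℝ) ^ ((r : ℤ) - s.cnt)
              * ((if v ∈ Rset G h s.sig then (1/2:ℝ) else 1) * Wt G h r g t (step G h r g s v)) := by
        intro v
        have hIv : InvF G h (step G h r g s v) := step_invF G h r g s v hI
        refine le_trans (ih (step G h r g s v) hIv) ?_
        by_cases hdv : (step G h r g s v).dead = true
        · rw [wt_dead G h r g t _ hdv, mul_zero, mul_zero, mul_zero]
        · have hdv' : (step G h r g s v).dead = false := by simpa using hdv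
          have hsdead : s.dead = false := by
            by_contra hbb
            have hb : s.dead = true := by simpa using hbb
            rw [step_dead G h r g s v hb] at hdv'
            exact absurd hdv' (by simp)
          have hvsamp : v ∉ s.samp := by
            intro hv
            have hdd : (step G h r g s v).dead = true := by
              rw [step, if_pos (Or.inr hv)]; rfl
            rw [hdd] at hdv'
            exact absurd hdv' (by simp)
          by_cases hvR : v ∈ Rset G h s.sig
          · have hprog := step_progress G h r g s v hsdead hvsamp hvR
            have hcnt2 : s.cnt + 1 ≤ (step G h r g s v).cnt := by
              rcases hprog with hp | hp
              · rw [hp] at hdv'; exact absurd hdv' (by simp)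
              · omega
            rw [if_pos hvR]
            have hzle : (2:ℝ) ^ ((r : ℤ) - (step G h r g s v).cnt)
                ≤ (2:ℝ) ^ ((r : ℤ) - s.cnt - 1) := by
              apply zpow_le_zpow_right₀ (by norm_num)
              have : (s.cnt : ℤ) + 1 ≤ ((step G h r g s v).cnt : ℤ) := by exact_mod_cast hcnt2
              omega
            have h2 : (2:ℝ) ^ ((r : ℤ) - s.cnt - 1)
                = (2:ℝ) ^ ((r : ℤ) - s.cnt) * (1/2 : ℝ) := by
              rw [zpow_sub₀ (by norm_num : (2:ℝ) ≠ 0), zpow_one]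
              ring
            calc (2:ℝ) ^ ((r : ℤ) - (step G h r g s v).cnt) * Wt G h r g t (step G h r g s v)
                ≤ (2:ℝ) ^ ((r : ℤ) - s.cnt - 1) * Wt G h r g t (step G h r g s v) := by
                  apply mul_le_mul_of_nonneg_right hzle (wt_nonneg G h r g t _)
              _ = (2:ℝ) ^ ((r : ℤ) - s.cnt) * ((1/2:ℝ) * Wt G h r g t (step G h r g s v)) := by
                  rw [h2]; ring
          · rw [if_neg hvR, one_mul]
            have hcnt2 : s.cnt ≤ (step G h r g s v).cnt := step_cnt G h r g s v
            apply mul_le_mul_of_nonneg_right _ (wt_nonneg G h r g t _)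
            apply zpow_le_zpow_right₀ (by norm_num)
            have : (s.cnt : ℤ) ≤ ((step G h r g s v).cnt : ℤ) := by exact_mod_cast hcnt2
            omega
      calc (∑ v : V, (((Finset.univ : Finset (Fin t → V)).filter
              (fun f' => (runL G h r g (step G h r g s v) (List.ofFn f')).dead = false)).card : ℝ))
          ≤ ∑ v : V, (2:ℝ) ^ ((r : ℤ) - s.cnt)
              * ((if v ∈ Rset G h s.sig then (1/2:ℝ) else 1) * Wt G h r g t (step G h r g s v)) :=
            Finset.sum_le_sum (fun v _ => hstepb v)
        _ = (2:ℝ) ^ ((r : ℤ) - s.cnt) * Wt G h r g (t+1) s := by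
            rw [Wt, Finset.mul_sum]

end AK

namespace AK
variable {V : Type} [Fintype V] [DecidableEq V] [LinearOrder V]

lemma honest_cascade (G : SimpleGraph V) {c : ℕ} (h r : ℕ) (hc : 0 < c) (hh : 0 < h)
    (hrr : c * Fintype.card V ≤ h * r) (φ : V → Fin c) (Sf : Finset V)
    (hφ : ∀ u ∈ Sf, ∀ v ∈ Sf, G.Adj u v → φ u ≠ φ v) :
    ∀ (N : ℕ) (s : St V c), s.uncons.card ≤ N → s.dead = false → Inv0 G h s →
    s.samp ⊆ Sf → (∀ v ∈ Sf, φ v ∈ s.sig v) →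
    ∃ g : ℕ → Fin c, (cascade G h r g s).dead = false ∧
      (∀ v ∈ Sf, φ v ∈ (cascade G h r g s).sig v) := by
  intro N
  induction N with
  | zero =>
      intro s hcard hd hI hsamp hsig
      have hT : ¬ (s.dead = false ∧ (s.uncons ∩ Rset G h s.sig).Nonempty) := by
        rintro ⟨-, x, hx⟩
        have hxu : x ∈ s.uncons := (Finset.mem_inter.1 hx).1
        have : 1 ≤ s.uncons.card := Finset.card_pos.2 ⟨x, hxu⟩
        omega
      refine ⟨fun _ => ⟨0, hc⟩, ?_, ?_⟩
      · rw [cascade_eq, dif_neg hT]; exact hd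
      · rw [cascade_eq, dif_neg hT]; exact hsig
  | succ N ihN =>
      intro s hcard hd hI hsamp hsig
      by_cases hT : (s.uncons ∩ Rset G h s.sig).Nonempty
      · have hTc : s.dead = false ∧ (s.uncons ∩ Rset G h s.sig).Nonempty := ⟨hd, hT⟩
        set u := (s.uncons ∩ Rset G h s.sig).min' hTc.2 with hu
        have humem := Finset.mem_inter.1 (Finset.min'_mem _ hTc.2)
        rw [← hu] at humem
        have huSf : u ∈ Sf := hsamp ((hI hd).1 humem.1)
        have hju : φ u ∈ s.sig u := hsig u huSf
        have hcnt : s.cnt < r := by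
          have h5 : h ≤ heavy G s.sig u (φ u) := by
            rcases mem_Rset.1 humem.2 with h0 | h1
            · exact absurd hju (by simp [h0])
            · exact h1 _ hju
          have h6 : h ≤ Phi s.sig := le_trans h5 heavy_le_phi
          have h7 := (hI hd).2.2
          have h8 : h * (s.cnt + 1) ≤ h * r := by
            have : h * (s.cnt + 1) = h * s.cnt + h := by ring
            omega
          have := Nat.le_of_mul_le_mul_left h8 hh
          omega
        set s' := consume G s u (φ u) with hs'
        have hI' : Inv0 G h s' := consume_inv0 G h s u (φ u) hd hI humem.1 humem.2 hju
        have hcard' : s'.uncons.card ≤ N := by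
          have he : s'.uncons = s.uncons.erase u := rfl
          rw [he, Finset.card_erase_of_mem humem.1]
          omega
        have hd' : s'.dead = false := rfl
        have hsamp' : s'.samp ⊆ Sf := hsamp
        have hsig' : ∀ v ∈ Sf, φ v ∈ s'.sig v := by
          intro v hv
          show φ v ∈ upd G s.sig u (φ u) v
          rw [upd]
          by_cases hvu : v = u
          · subst hvu; simp
          · rw [if_neg hvu]
            by_cases hadj : G.Adj u v
            · rw [if_pos hadj]
              exact Finset.mem_erase.2 ⟨(hφ u huSf v hv hadj).symm, hsig v hv⟩
            · rw [if_neg hadj]; exact hsig v hv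
        obtain ⟨g2, hg2dead, hg2sig⟩ := ihN s' hcard' hd' hI' hsamp' hsig'
        set g : ℕ → Fin c := fun m => if m = s.cnt then φ u else g2 m with hgdef
        have hgval : g s.cnt = φ u := by rw [hgdef]; simp
        have hs'cnt : s'.cnt = s.cnt + 1 := rfl
        have hunf : cascade G h r g s = cascade G h r g2 s' := by
          rw [cascade_eq, dif_pos hTc, if_pos (by
            refine ⟨hcnt, ?_⟩
            rw [hgval, ← hu]
            exact hju)]
          rw [← hu, hgval, ← hs']
          apply cascade_agree
          · intro m hm1 hm2
            rw [hs'cnt] at hm1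
            rw [hgdef]
            simp only [if_neg (by omega : ¬ m = s.cnt)]
          · exact hg2dead
        exact ⟨g, by rw [hunf]; exact hg2dead, by rw [hunf]; exact hg2sig⟩
      · have hTT : ¬ (s.dead = false ∧ (s.uncons ∩ Rset G h s.sig).Nonempty) := by
          rintro ⟨-, hx⟩; exact hT hx
        refine ⟨fun _ => ⟨0, hc⟩, ?_, ?_⟩
        · rw [cascade_eq, dif_neg hTT]; exact hd
        · rw [cascade_eq, dif_neg hTT]; exact hsig

lemma honest_run (G : SimpleGraph V) {c : ℕ} (h r : ℕ) (hc : 0 < c) (hh : 0 < h)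
    (hrr : c * Fintype.card V ≤ h * r) (φ : V → Fin c) (Sf : Finset V)
    (hφ : ∀ u ∈ Sf, ∀ v ∈ Sf, G.Adj u v → φ u ≠ φ v) :
    ∀ (L : List V) (s : St V c), s.dead = false → Inv0 G h s →
    s.samp ⊆ Sf → (∀ v ∈ Sf, φ v ∈ s.sig v) → L.Nodup →
    (∀ v ∈ L, v ∈ Sf) → (∀ v ∈ L, v ∉ s.samp) →
    ∃ g : ℕ → Fin c, (runL G h r g s L).dead = false := by
  intro L
  induction L with
  | nil =>
      intro s hd _ _ _ _ _ _
      exact ⟨fun _ => ⟨0, hc⟩, hd⟩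
  | cons v L ih =>
      intro s hd hI hsamp hsig hnd hSf hnotin
      have hvSf : v ∈ Sf := hSf v List.mem_cons_self
      have hvs : v ∉ s.samp := hnotin v List.mem_cons_self
      set s1 : St V c := { s with samp := insert v s.samp, uncons := insert v s.uncons } with hs1
      have hd1 : s1.dead = false := hd
      have hI1 : Inv0 G h s1 := by
        intro _
        obtain ⟨h1, h2, h3⟩ := hI hd
        have hvu : v ∉ s.uncons := fun hmem => hvs (h1 hmem)
        refine ⟨Finset.insert_subset_insert v h1, ?_, h3⟩
        show (insert v s.samp).card = (insert v s.uncons).card + s.cnt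
        rw [Finset.card_insert_of_notMem hvs, Finset.card_insert_of_notMem hvu]
        omega
      have hsamp1 : s1.samp ⊆ Sf := by
        show insert v s.samp ⊆ Sf
        exact Finset.insert_subset hvSf hsamp
      obtain ⟨g1, hg1dead, hg1sig⟩ := honest_cascade G h r hc hh hrr φ Sf hφ
        s1.uncons.card s1 le_rfl hd1 hI1 hsamp1 hsig
      set s2 := cascade G h r g1 s1 with hs2
      have hI2 : InvF G h s2 := cascade_invF G h r g1 s1 hI1
      have hs2samp : s2.samp = insert v s.samp := by
        rw [hs2, cascade_samp]
      obtain ⟨g2, hg2dead⟩ := ih s2 hg1dead hI2.1 (by rw [hs2samp]; exact hsamp1) hg1sig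
        (List.Nodup.of_cons hnd) (fun w hw => hSf w (List.mem_cons_of_mem v hw))
        (fun w hw => by
          rw [hs2samp]
          intro hmem
          rcases Finset.mem_insert.1 hmem with he | hmem2
          · exact (List.nodup_cons.1 hnd).1 (he ▸ hw)
          · exact hnotin w (List.mem_cons_of_mem v hw) hmem2)
      set g : ℕ → Fin c := fun m => if m < s2.cnt then g1 m else g2 m with hgdef
      have hstep1 : step G h r g s v = cascade G h r g s1 := by
        rw [step, if_neg (by simp [hd, hvs])]
      have hcasc : cascade G h r g s1 = s2 := by
        rw [hs2]
        apply cascade_agree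
        · intro m hm1 hm2
          rw [hgdef]
          simp only [if_pos (by rw [← hs2] at hm2; exact hm2)]
        · rw [← hs2]; exact hg1dead
      have hrun2 : runL G h r g s2 L = runL G h r g2 s2 L := by
        apply run_agree
        · intro m hm1 hm2
          rw [hgdef]
          simp only [if_neg (by omega : ¬ m < s2.cnt)]
        · exact hg2dead
      refine ⟨g, ?_⟩
      rw [runL_cons, hstep1, hcasc, hrun2]
      exact hg2dead

end AK

namespace AK
variable {V : Type} [Fintype V] [DecidableEq V] [LinearOrder V]

def monoGraph (G : SimpleGraph V) {c : ℕ} (χ : V → Fin c) : SimpleGraph V where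
  Adj u v := G.Adj u v ∧ χ u = χ v
  symm := ⟨fun u v hx => ⟨hx.1.symm, hx.2.symm⟩⟩
  loopless := ⟨fun v hx => G.irrefl hx.1⟩

lemma Rset_big (G : SimpleGraph V) {c : ℕ} (hc : 0 < c) (h : ℕ) (ε : ℝ)
    (hε : 0 < ε) (hεn : 4 ≤ ε * (Fintype.card V : ℝ))
    (hhub : (h : ℝ) ≤ ε * (Fintype.card V : ℝ) / 4 + 1)
    (hFar : ∀ χ : V → Fin c,
      ε * (Fintype.card V : ℝ)^2 < (((monoGraph G χ).edgeFinset.card : ℕ) : ℝ)) :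
    ∀ σ : V → Finset (Fin c),
      (3/4) * (ε * (Fintype.card V : ℝ)) ≤ ((Rset G h σ).card : ℝ) := by
  intro σ
  by_contra hR
  push_neg at hR
  set n := Fintype.card V with hn
  have hex : ∀ v, v ∉ Rset G h σ → ∃ j, j ∈ σ v ∧ heavy G σ v j < h := by
    intro v hv
    rw [mem_Rset] at hv
    push_neg at hv
    obtain ⟨j, hj1, hj2⟩ := hv.2
    exact ⟨j, hj1, by omega⟩
  set χ : V → Fin c := fun v =>
    if hv : v ∈ Rset G h σ then (⟨0, hc⟩ : Fin c) else (hex v hv).choose with hχ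
  have hχspec : ∀ v, v ∉ Rset G h σ → χ v ∈ σ v ∧ heavy G σ v (χ v) < h := by
    intro v hv
    rw [hχ]
    simp only [dif_neg hv]
    exact (hex v hv).choose_spec
  have hsum : ∑ v, (monoGraph G χ).degree v = 2 * (monoGraph G χ).edgeFinset.card :=
    SimpleGraph.sum_degrees_eq_twice_card_edges _
  -- per-vertex degree bounds
  have hdegR : ∀ v : V, (monoGraph G χ).degree v ≤ n := by
    intro v
    exact le_of_le_of_eq (Finset.card_le_univ _) Finset.card_univ
  have hdegNR : ∀ v : V, v ∉ Rset G h σ →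
      (monoGraph G χ).degree v ≤ (Rset G h σ).card + h := by
    intro v hv
    have hsub : (monoGraph G χ).neighborFinset v ⊆
        Rset G h σ ∪ Finset.univ.filter (fun u => G.Adj v u ∧ χ v ∈ σ u) := by
      intro u hu
      rw [SimpleGraph.mem_neighborFinset] at hu
      obtain ⟨hadj, hcol⟩ := hu
      by_cases huR : u ∈ Rset G h σ
      · exact Finset.mem_union_left _ huR
      · refine Finset.mem_union_right _ (Finset.mem_filter.2 ⟨Finset.mem_univ _, hadj, ?_⟩)
        rw [hcol]
        exact (hχspec u huR).1
    calc (monoGraph G χ).degree v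
        ≤ (Rset G h σ ∪ Finset.univ.filter (fun u => G.Adj v u ∧ χ v ∈ σ u)).card :=
          Finset.card_le_card hsub
      _ ≤ (Rset G h σ).card + (Finset.univ.filter (fun u => G.Adj v u ∧ χ v ∈ σ u)).card :=
          Finset.card_union_le _ _
      _ ≤ (Rset G h σ).card + h := by
          have := (hχspec v hv).2
          rw [heavy] at this
          omega
  -- sum bound
  have hsplit := Finset.sum_sdiff (f := fun v => ((monoGraph G χ).degree v : ℝ))
    (Finset.subset_univ (Rset G h σ))
  have b1 : ∑ v ∈ Rset G h σ, ((monoGraph G χ).degree v : ℝ)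
      ≤ ((Rset G h σ).card : ℝ) * n := by
    calc ∑ v ∈ Rset G h σ, ((monoGraph G χ).degree v : ℝ)
        ≤ ∑ _v ∈ Rset G h σ, (n : ℝ) :=
          Finset.sum_le_sum (fun v _ => by exact_mod_cast hdegR v)
      _ = ((Rset G h σ).card : ℝ) * n := by rw [Finset.sum_const, nsmul_eq_mul]
  have b2 : ∑ v ∈ Finset.univ \ Rset G h σ, ((monoGraph G χ).degree v : ℝ)
      ≤ (n:ℝ) * (((Rset G h σ).card : ℝ) + h) := by
    calc ∑ v ∈ Finset.univ \ Rset G h σ, ((monoGraph G χ).degree v : ℝ)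
        ≤ ∑ _v ∈ Finset.univ \ Rset G h σ, (((Rset G h σ).card : ℝ) + (h:ℝ)) :=
          Finset.sum_le_sum (fun v hv => by
            have := hdegNR v (Finset.mem_sdiff.1 hv).2
            exact_mod_cast this)
      _ = ((Finset.univ \ Rset G h σ).card : ℝ) * (((Rset G h σ).card : ℝ) + h) := by
          rw [Finset.sum_const, nsmul_eq_mul]
      _ ≤ (n:ℝ) * (((Rset G h σ).card : ℝ) + h) := by
          apply mul_le_mul_of_nonneg_right
          · have hle : (Finset.univ \ Rset G h σ).card ≤ n :=
              le_of_le_of_eq (Finset.card_le_univ _) Finset.card_univ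
            exact_mod_cast hle
          · positivity
  have hsum_le : (∑ v, ((monoGraph G χ).degree v : ℝ))
      ≤ 2 * ((Rset G h σ).card : ℝ) * n + (n : ℝ) * h := by
    rw [← hsplit]
    nlinarith [b1, b2]
  have h2e : 2 * (ε * (n:ℝ)^2) < ∑ v, ((monoGraph G χ).degree v : ℝ) := by
    have hF := hFar χ
    have hcast : (∑ v, ((monoGraph G χ).degree v : ℝ))
        = 2 * ((monoGraph G χ).edgeFinset.card : ℝ) := by
      exact_mod_cast hsum
    rw [hcast]
    rw [hn] at hF ⊢
    linarith
  have hn0 : (0:ℝ) ≤ (n:ℝ) := Nat.cast_nonneg _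
  nlinarith [h2e, hsum_le, mul_le_mul_of_nonneg_right (le_of_lt hR) hn0,
    mul_le_mul_of_nonneg_right hhub hn0, mul_le_mul_of_nonneg_right hεn hn0]

lemma core_count (G : SimpleGraph V) {c : ℕ} (hc : 0 < c) (h r k : ℕ) (p : ℝ)
    (hp0 : 0 ≤ p) (hp1 : p ≤ 1) (hh : 0 < h) (hVne : Nonempty V)
    (hrr : c * Fintype.card V ≤ h * r)
    (hRbig : ∀ σ : V → Finset (Fin c),
      (r : ℝ) + 2 * p * (Fintype.card V : ℝ) ≤ ((Rset G h σ).card : ℝ)) :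
    ((((Finset.univ : Finset V).powersetCard k).filter
        (fun π : Finset V => (G.induce (↑π : Set V)).Colorable c)).card : ℝ) * (k.factorial : ℝ)
      ≤ (c:ℝ)^r * 2^r * (1-p)^k * (((Fintype.card V).descFactorial k : ℕ) : ℝ) := by
  classical
  set n := Fintype.card V with hn
  set s0 : St V c :=
    { sig := fun _ => Finset.univ, samp := ∅, uncons := ∅, cnt := 0, dead := false } with hs0
  have hs0inv : InvF G h s0 := by
    constructor
    · intro _
      refine ⟨Finset.empty_subset _, by simp [hs0], ?_⟩
      show Phi (fun _ => (Finset.univ : Finset (Fin c))) + h * 0 ≤ c * n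
      rw [Phi]
      simp [Finset.card_univ, mul_comm, hn]
    · intro _
      show (∅ : Finset V) ∩ _ = ∅
      exact Finset.empty_inter _
  set CS := ((Finset.univ : Finset V).powersetCard k).filter
    (fun π : Finset V => (G.induce (↑π : Set V)).Colorable c) with hCS
  set badF : Finset (Fin k → V) := Finset.univ.filter
    (fun f => ∃ g : ℕ → Fin c, (runL G h r g s0 (List.ofFn f)).dead = false) with hbadF
  -- claim 1 : CS.card * k! ≤ badF.card
  have claim1 : CS.card * k.factorial ≤ badF.card := by
    set Θ : Finset V × Equiv.Perm (Fin k) → (Fin k → V) := fun pr i =>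
      if hπ : pr.1.card = k then ((pr.1.orderIsoOfFin hπ (pr.2 i)) : V) else hVne.some with hΘ
    have hmaps : ∀ pr ∈ CS ×ˢ (Finset.univ : Finset (Equiv.Perm (Fin k))), Θ pr ∈ badF := by
      rintro ⟨π, τ⟩ hpr
      have hπCS : π ∈ CS := (Finset.mem_product.1 hpr).1
      obtain ⟨hπpow, hπcol⟩ := Finset.mem_filter.1 hπCS
      have hπk : π.card = k := (Finset.mem_powersetCard.1 hπpow).2
      obtain ⟨D⟩ := hπcol
      set φ : V → Fin c := fun v => if hv : v ∈ π then D ⟨v, hv⟩ else ⟨0, hc⟩ with hφdef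
      have hφ : ∀ u ∈ (π : Finset V), ∀ v ∈ π, G.Adj u v → φ u ≠ φ v := by
        intro u hu v hv hadj
        have : φ u = D ⟨u, hu⟩ := by rw [hφdef]; simp [hu]
        rw [this]
        have : φ v = D ⟨v, hv⟩ := by rw [hφdef]; simp [hv]
        rw [this]
        exact D.valid hadj
      have hf : Θ (π, τ) = fun i => ((π.orderIsoOfFin hπk (τ i)) : V) := by
        funext i
        rw [hΘ]
        simp [hπk]
      have hfinj : Function.Injective (Θ (π, τ)) := by
        rw [hf]
        intro a b hab
        exact τ.injective ((π.orderIsoOfFin hπk).injective (Subtype.coe_injective hab))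
      have hfmem : ∀ i, Θ (π, τ) i ∈ π := by
        intro i
        rw [hf]
        exact ((π.orderIsoOfFin hπk (τ i))).2
      obtain ⟨g, hg⟩ := honest_run G h r hc hh hrr φ π hφ (List.ofFn (Θ (π, τ))) s0
        rfl hs0inv.1 (Finset.empty_subset _) (fun v _ => Finset.mem_univ _)
        (List.nodup_ofFn.2 hfinj)
        (fun v hv => by
          obtain ⟨i, hi⟩ := List.mem_ofFn.1 hv
          rw [← hi]
          exact hfmem i)
        (fun v _ => Finset.notMem_empty v)
      exact Finset.mem_filter.2 ⟨Finset.mem_univ _, g, hg⟩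
    have hinj : Set.InjOn Θ ↑(CS ×ˢ (Finset.univ : Finset (Equiv.Perm (Fin k)))) := by
      rintro ⟨π1, τ1⟩ h1 ⟨π2, τ2⟩ h2 heq
      have hc1 : π1.card = k :=
        (Finset.mem_powersetCard.1
          (Finset.mem_filter.1 (Finset.mem_product.1 (Finset.mem_coe.1 h1)).1).1).2
      have hc2 : π2.card = k :=
        (Finset.mem_powersetCard.1
          (Finset.mem_filter.1 (Finset.mem_product.1 (Finset.mem_coe.1 h2)).1).1).2
      have hf1 : Θ (π1, τ1) = fun i => ((π1.orderIsoOfFin hc1 (τ1 i)) : V) := by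
        funext i; rw [hΘ]; simp [hc1]
      have hf2 : Θ (π2, τ2) = fun i => ((π2.orderIsoOfFin hc2 (τ2 i)) : V) := by
        funext i; rw [hΘ]; simp [hc2]
      have himg : ∀ (π : Finset V) (hπ : π.card = k) (τ : Equiv.Perm (Fin k)),
          Finset.image (fun i => ((π.orderIsoOfFin hπ (τ i)) : V)) Finset.univ = π := by
        intro π hπ τ
        apply Finset.eq_of_subset_of_card_le
        · intro x hx
          obtain ⟨i, -, rfl⟩ := Finset.mem_image.1 hx
          exact (π.orderIsoOfFin hπ (τ i)).2
        · rw [Finset.card_image_of_injective _ (fun a b hab =>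
            τ.injective ((π.orderIsoOfFin hπ).injective (Subtype.coe_injective hab)))]
          rw [Finset.card_univ, Fintype.card_fin, hπ]
      have hπeq : π1 = π2 := by
        have e1 := himg π1 hc1 τ1
        have e2 := himg π2 hc2 τ2
        rw [← e1, ← e2, ← hf1, ← hf2, heq]
      subst hπeq
      have hτeq : τ1 = τ2 := by
        apply Equiv.ext
        intro i
        have := congrFun heq i
        rw [hf1, hf2] at this
        have h3 := Subtype.coe_injective this
        exact (π1.orderIsoOfFin hc1).injective h3
      rw [hτeq]
    have hcard := Finset.card_le_card_of_injOn Θ hmaps hinj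
    rw [Finset.card_product, Finset.card_univ, Fintype.card_perm, Fintype.card_fin] at hcard
    exact hcard
  -- claim 2 : union bound over restricted oracles
  set extj : (Fin r → Fin c) → (ℕ → Fin c) :=
    fun j m => if hm : m < r then j ⟨m, hm⟩ else ⟨0, hc⟩ with hextj
  have claim2 : badF ⊆ (Finset.univ : Finset (Fin r → Fin c)).biUnion
      (fun j => Finset.univ.filter
        (fun f : Fin k → V => (runL G h r (extj j) s0 (List.ofFn f)).dead = false)) := by
    intro f hf
    obtain ⟨-, g, hg⟩ := Finset.mem_filter.1 hf
    set j : Fin r → Fin c := fun i => g i with hj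
    have hcnt_le : (runL G h r g s0 (List.ofFn f)).cnt ≤ r := by
      have hIr := run_invF G h r g (List.ofFn f) s0 hs0inv
      exact cnt_le_r hh hrr hIr.1 hg
    have hagree : runL G h r (extj j) s0 (List.ofFn f) = runL G h r g s0 (List.ofFn f) := by
      apply run_agree
      · intro m hm1 hm2
        have hmr : m < r := lt_of_lt_of_le hm2 hcnt_le
        rw [hextj]
        simp only [dif_pos hmr]
        rfl
      · exact hg
    refine Finset.mem_biUnion.2 ⟨j, Finset.mem_univ _, Finset.mem_filter.2 ⟨Finset.mem_univ _, ?_⟩⟩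
    rw [hagree]
    exact hg
  -- claim 3+4 : count each piece
  have claim4 : ∀ j : Fin r → Fin c,
      (((Finset.univ : Finset (Fin k → V)).filter
        (fun f => (runL G h r (extj j) s0 (List.ofFn f)).dead = false)).card : ℝ)
      ≤ 2^r * (1-p)^k * ((n.descFactorial k : ℕ) : ℝ) := by
    intro j
    have hcw := count_le_wt G h r hh hrr (extj j) k s0 hs0inv
    have hwb := wt_bound G h r p hp0 hp1 hh hrr hRbig (extj j) k s0 hs0inv
    have hz : (2:ℝ) ^ ((r : ℤ) - s0.cnt) = 2^r := by
      show (2:ℝ) ^ ((r : ℤ) - (0:ℕ)) = 2^r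
      rw [Nat.cast_zero, sub_zero, zpow_natCast]
    have hs0samp : s0.samp.card = 0 := by rw [hs0]; simp
    rw [hs0samp, Nat.sub_zero] at hwb
    calc (((Finset.univ : Finset (Fin k → V)).filter
          (fun f => (runL G h r (extj j) s0 (List.ofFn f)).dead = false)).card : ℝ)
        ≤ (2:ℝ) ^ ((r : ℤ) - s0.cnt) * Wt G h r (extj j) k s0 := hcw
      _ = 2^r * Wt G h r (extj j) k s0 := by rw [hz]
      _ ≤ 2^r * ((1-p)^k * ((n.descFactorial k : ℕ) : ℝ)) := by
          apply mul_le_mul_of_nonneg_left hwb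
          positivity
      _ = 2^r * (1-p)^k * ((n.descFactorial k : ℕ) : ℝ) := by ring
  -- combine
  have hblebound : (badF.card : ℝ) ≤ (c:ℝ)^r * (2^r * (1-p)^k * ((n.descFactorial k : ℕ) : ℝ)) := by
    have hb1 : badF.card ≤ ∑ j : Fin r → Fin c,
        (Finset.univ.filter
          (fun f : Fin k → V => (runL G h r (extj j) s0 (List.ofFn f)).dead = false)).card :=
      le_trans (Finset.card_le_card claim2) (Finset.card_biUnion_le)
    have hb2 : (badF.card : ℝ) ≤ ∑ j : Fin r → Fin c,
        ((Finset.univ.filter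
          (fun f : Fin k → V => (runL G h r (extj j) s0 (List.ofFn f)).dead = false)).card : ℝ) := by
      exact_mod_cast hb1
    refine le_trans hb2 ?_
    calc (∑ j : Fin r → Fin c, ((Finset.univ.filter
          (fun f : Fin k → V => (runL G h r (extj j) s0 (List.ofFn f)).dead = false)).card : ℝ))
        ≤ ∑ _j : Fin r → Fin c, 2^r * (1-p)^k * ((n.descFactorial k : ℕ) : ℝ) :=
          Finset.sum_le_sum (fun j _ => claim4 j)
      _ = (Fintype.card (Fin r → Fin c) : ℝ) * (2^r * (1-p)^k * ((n.descFactorial k : ℕ) : ℝ)) := by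
          rw [Finset.sum_const, nsmul_eq_mul, Finset.card_univ]
      _ = (c:ℝ)^r * (2^r * (1-p)^k * ((n.descFactorial k : ℕ) : ℝ)) := by
          rw [Fintype.card_fun, Fintype.card_fin, Fintype.card_fin]
          push_cast
          ring
  calc (CS.card : ℝ) * (k.factorial : ℝ)
      ≤ (badF.card : ℝ) := by exact_mod_cast claim1
    _ ≤ (c:ℝ)^r * (2^r * (1-p)^k * ((n.descFactorial k : ℕ) : ℝ)) := hblebound
    _ = (c:ℝ)^r * 2^r * (1-p)^k * ((n.descFactorial k : ℕ) : ℝ) := by ring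

end AK

set_option maxHeartbeats 1000000 in
open AK in
theorem colorability_reducible :
    ∃ C : ℝ, 0 < C ∧
      ∀ (c : ℕ), 2 ≤ c → ∀ ε : ℝ, 0 < ε → ε < 1 →
      ∀ k : ℕ, k = ⌈C * ((c : ℝ) * Real.log c) / ε ^ 2⌉₊ →
      ∀ (V : Type) [Fintype V] [DecidableEq V], ∀ (G : SimpleGraph V),
      ∀ n : ℕ, n = Fintype.card V → k ≤ n →
      ((G.Colorable c →
          ∀ π ∈ (Finset.univ : Finset V).powersetCard k,
            (G.induce (↑π : Set V)).Colorable c) ∧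
       ((∀ G' : SimpleGraph V,
            ((symmDiff G.edgeSet G'.edgeSet).ncard : ℝ) ≤ ε * (n : ℝ) ^ 2 →
            ¬ G'.Colorable c) →
          ((((Finset.univ : Finset V).powersetCard k).filter
              (fun π : Finset V => ¬ (G.induce (↑π : Set V)).Colorable c)).card : ℝ)
            ≥ 2 / 3 * (((Finset.univ : Finset V).powersetCard k).card : ℝ))) := by
  classical
  refine ⟨100, by norm_num, ?_⟩
  intro c hc2 ε hε0 hε1 k hk V _ _ G n hn hkn
  subst hn
  constructor
  · -- part (1)
    intro hcol π _
    obtain ⟨D⟩ := hcol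
    exact ⟨SimpleGraph.Coloring.mk (fun x => D x.val) (fun {a b} hadj => D.valid hadj)⟩
  · -- part (2)
    intro hfar
    letI : LinearOrder V := LinearOrder.lift' (Fintype.equivFin V) (Fintype.equivFin V).injective
    set n := Fintype.card V with hn
    have hc0 : 0 < c := by omega
    have hc2R : (2:ℝ) ≤ (c:ℝ) := by exact_mod_cast hc2
    have hlog2 : (0.6931471803:ℝ) < Real.log 2 := Real.log_two_gt_d9
    have hlogc : Real.log 2 ≤ Real.log c := Real.log_le_log (by norm_num) hc2R
    have hlogc0 : (0:ℝ) < Real.log c := by linarith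
    set L := Real.log c with hL
    have hcL : (1.38:ℝ) ≤ (c:ℝ) * L := by
      have h1 : (2:ℝ) * Real.log 2 ≤ (c:ℝ) * L := by
        apply mul_le_mul hc2R hlogc (by linarith) (by linarith)
      linarith
    have hx : (0:ℝ) < 100 * ((c:ℝ) * L) / ε^2 := by positivity
    have hk1 : 1 ≤ k := by
      rw [hk]
      have := Nat.ceil_pos.2 hx
      omega
    have hkR : 100 * ((c:ℝ) * L) / ε^2 ≤ (k:ℝ) := by
      rw [hk]; exact Nat.le_ceil _
    have hnkR : (k:ℝ) ≤ (n:ℝ) := by exact_mod_cast hkn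
    have hn1 : 1 ≤ n := le_trans hk1 hkn
    have hn0R : (0:ℝ) < (n:ℝ) := by
      have : (1:ℝ) ≤ (n:ℝ) := by exact_mod_cast hn1
      linarith
    have hεk : 100 * ((c:ℝ)*L) / ε ≤ ε * k := by
      have h1 : ε * (100 * ((c:ℝ) * L) / ε^2) ≤ ε * k :=
        mul_le_mul_of_nonneg_left hkR (le_of_lt hε0)
      have h2 : ε * (100 * ((c:ℝ) * L) / ε^2) = 100 * ((c:ℝ)*L) / ε := by
        field_simp
      linarith
    have hclb : (0:ℝ) < (c:ℝ) := by linarith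
    set w : ℝ := (c:ℝ)/ε with hw
    set q : ℝ := ((c:ℝ)*L)/ε with hqdef
    have hqw : q = L * w := by rw [hqdef, hw]; ring
    have hεk' : 100 * q ≤ ε * k := by
      have e : 100 * ((c:ℝ)*L) / ε = 100 * q := by rw [hqdef]; ring
      linarith [hεk, e]
    have hLlb : (0.69:ℝ) ≤ L := by linarith
    have hcLq : (c:ℝ) * L ≤ q := by
      rw [hqdef]
      exact le_div_self (by positivity) hε0 (le_of_lt hε1)
    have hqL : (1.38:ℝ) ≤ q := by linarith [hcL, hcLq]
    have hw2 : (2:ℝ) ≤ w := by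
      rw [hw, le_div_iff₀ hε0]
      nlinarith [hc2R, hε1]
    have hw0 : (0:ℝ) ≤ w := by linarith
    have hεn : 4 ≤ ε * (n:ℝ) := by
      have h1 : ε * (k:ℝ) ≤ ε * n := mul_le_mul_of_nonneg_left hnkR (le_of_lt hε0)
      linarith [hεk', hqL]
    -- the threshold and budget
    set h : ℕ := ⌈ε * (n:ℝ) / 4⌉₊ with hhdef
    have hhl : ε * (n:ℝ) / 4 ≤ (h:ℝ) := Nat.le_ceil _
    have hhu : (h:ℝ) ≤ ε * (n:ℝ) / 4 + 1 :=
      le_of_lt (Nat.ceil_lt_add_one (by positivity))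
    have hh0 : 0 < h := Nat.ceil_pos.2 (by positivity)
    have hh0R : (0:ℝ) < (h:ℝ) := by
      have : (0:ℝ) < ε * n / 4 := by positivity
      linarith
    set r : ℕ := c * n / h + 1 with hrdef
    have hrr : c * n ≤ h * r := by
      have hdm := Nat.div_add_mod (c * n) h
      have hml : (c * n) % h < h := Nat.mod_lt _ hh0
      have hhr : h * r = h * (c * n / h) + h := by rw [hrdef]; ring
      omega
    have hrR : (r:ℝ) ≤ 4 * w + 1 := by
      have h1 : ((c * n / h : ℕ):ℝ) ≤ ((c * n : ℕ):ℝ) / (h:ℝ) := Nat.cast_div_le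
      have h2 : ((c * n : ℕ):ℝ) / (h:ℝ) ≤ ((c * n : ℕ):ℝ) / (ε*(n:ℝ)/4) := by
        apply div_le_div_of_nonneg_left (by positivity) (by positivity) hhl
      have h3 : ((c * n : ℕ):ℝ) / (ε*(n:ℝ)/4) = 4 * w := by
        have hne : (ε:ℝ) ≠ 0 := ne_of_gt hε0
        have hnn : ((n:ℕ):ℝ) ≠ 0 := ne_of_gt hn0R
        rw [hw]
        push_cast
        field_simp
        try ring
      have h4 : (r:ℝ) = ((c * n / h : ℕ):ℝ) + 1 := by
        rw [hrdef]; push_cast; ring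
      linarith
    clear_value L n h r
    -- farness in the mono-edge form
    have hFar : ∀ χ : V → Fin c,
        ε * (n:ℝ)^2 < (((monoGraph G χ).edgeFinset.card : ℕ) : ℝ) := by
      intro χ
      by_contra hle
      push_neg at hle
      set M : Set (Sym2 V) := (monoGraph G χ).edgeSet with hM
      have hMsub : M ⊆ G.edgeSet :=
        SimpleGraph.edgeSet_mono (fun u v hadj => hadj.1)
      have hsd : symmDiff G.edgeSet (G.deleteEdges M).edgeSet = M := by
        rw [SimpleGraph.edgeSet_deleteEdges, symmDiff_def]
        ext e
        have hme := @hMsub e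
        simp only [Set.sup_eq_union, Set.mem_union, Set.mem_diff]
        tauto
      have hncard : ((symmDiff G.edgeSet (G.deleteEdges M).edgeSet).ncard : ℝ) ≤ ε * (n:ℝ)^2 := by
        rw [hsd]
        have hMc : M.ncard = (monoGraph G χ).edgeFinset.card := by
          rw [hM, ← SimpleGraph.coe_edgeFinset, Set.ncard_coe_finset]
        rw [hMc]
        exact hle
      have hcol' : (G.deleteEdges M).Colorable c := by
        have C : (G.deleteEdges M).Coloring (Fin c) := SimpleGraph.Coloring.mk χ (by
          intro u v hadj heq
          have hd : G.Adj u v ∧ s(u,v) ∉ M := by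
            simpa [SimpleGraph.deleteEdges_adj] using hadj
          exact hd.2 ((SimpleGraph.mem_edgeSet (monoGraph G χ)).2 ⟨hd.1, heq⟩))
        have := C.colorable
        simpa using this
      exact hfar (G.deleteEdges M) hncard hcol'
    have hRbig0 : ∀ σ : V → Finset (Fin c),
        3/4 * (ε * (n:ℝ)) ≤ ((Rset G h σ).card : ℝ) := by
      have hFar' : ∀ χ : V → Fin c,
          ε * ((Fintype.card V : ℕ):ℝ)^2 < (((monoGraph G χ).edgeFinset.card : ℕ) : ℝ) := by
        intro χ; rw [← hn]; exact hFar χ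
      have h1 := Rset_big G hc0 h ε hε0 (by rw [← hn]; exact hεn) (by rw [← hn]; exact hhu) hFar'
      intro σ
      rw [hn]
      exact h1 σ
    have hrsmall : (r:ℝ) ≤ ε * (n:ℝ) / 4 := by
      have h1 : ε * (k:ℝ) ≤ ε * n := mul_le_mul_of_nonneg_left hnkR (le_of_lt hε0)
      have hp1 : 69 * w ≤ 100 * (L * w) := by
        nlinarith [mul_nonneg (by linarith : (0:ℝ) ≤ L - 0.69) hw0]
      have key : 16 * w + 4 ≤ ε * n := by
        have e1 : 100 * q = 100 * (L * w) := by rw [hqw]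
        linarith [hεk', hp1, hw2]
      linarith [key, hrR]
    have hRbig : ∀ σ : V → Finset (Fin c),
        (r : ℝ) + 2 * (ε/4) * (n : ℝ) ≤ ((Rset G h σ).card : ℝ) := by
      intro σ
      have := hRbig0 σ
      linarith [hrsmall]
    have hVne : Nonempty V := by
      rw [← Fintype.card_pos_iff, ← hn]
      omega
    have hcore := core_count G hc0 h r k (ε/4) (by positivity) (by linarith) hh0 hVne
      (by rw [← hn]; exact hrr)
      (fun σ => by rw [← hn]; exact hRbig σ)
    rw [← hn] at hcore
    -- numeric bound (c)^r 2^r (1-ε/4)^k ≤ 1/3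
    have hfinal : (c:ℝ)^r * 2^r * (1-ε/4)^k ≤ 1/3 := by
      have h2c : (0:ℝ) < 2*(c:ℝ) := by linarith
      have e1 : (c:ℝ)^r * 2^r = (2*(c:ℝ))^r := by
        rw [mul_pow]; ring
      have e2 : (2*(c:ℝ))^r = Real.exp ((r:ℝ) * Real.log (2*(c:ℝ))) := by
        rw [Real.exp_nat_mul, Real.exp_log h2c]
      have e3 : (1-ε/4)^k ≤ Real.exp (-(ε/4) * (k:ℝ)) := by
        have h4 : 1 - ε/4 ≤ Real.exp (-(ε/4)) := by
          have := Real.add_one_le_exp (-(ε/4)); linarith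
        calc (1-ε/4)^k ≤ (Real.exp (-(ε/4)))^k :=
              pow_le_pow_left₀ (by linarith) h4 k
          _ = Real.exp (-(ε/4) * (k:ℝ)) := by
              rw [← Real.exp_nat_mul]
              ring_nf
      have hlog2c : Real.log (2*(c:ℝ)) = Real.log 2 + Real.log c :=
        Real.log_mul (by norm_num) (by linarith)
      have hlog2cle : Real.log (2*(c:ℝ)) ≤ 2 * L := by
        rw [hlog2c, ← hL]; linarith
      have hlog2c0 : 0 ≤ Real.log (2*(c:ℝ)) := by
        rw [hlog2c, ← hL]; linarith
      have hr5 : (r:ℝ) ≤ 5 * w := by linarith [hrR, hw2]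
      have hr0 : (0:ℝ) ≤ (r:ℝ) := Nat.cast_nonneg _
      have hexpo : (r:ℝ) * Real.log (2*(c:ℝ)) + (-(ε/4)) * (k:ℝ) ≤ -2 := by
        have t1 : (r:ℝ) * Real.log (2*(c:ℝ)) ≤ (5*w) * (2*L) := by
          apply mul_le_mul hr5 hlog2cle hlog2c0 (by linarith)
        have t1' : (5*w) * (2*L) = 10 * q := by rw [hqw]; ring
        have t2 : 25 * q ≤ (ε/4) * k := by linarith [hεk']
        linarith [t1, t1', t2, hqL]
      have hexp2 : (3:ℝ) ≤ Real.exp 2 := by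
        have := Real.add_one_le_exp (2:ℝ); linarith
      have hinv : Real.exp (-2) ≤ 1/3 := by
        rw [Real.exp_neg]
        have h3 : (0:ℝ) < 3 := by norm_num
        calc (Real.exp 2)⁻¹ ≤ (3:ℝ)⁻¹ := inv_anti₀ h3 hexp2
          _ = 1/3 := by norm_num
      calc (c:ℝ)^r * 2^r * (1-ε/4)^k
          = Real.exp ((r:ℝ) * Real.log (2*(c:ℝ))) * (1-ε/4)^k := by rw [e1, e2]
        _ ≤ Real.exp ((r:ℝ) * Real.log (2*(c:ℝ))) * Real.exp (-(ε/4) * (k:ℝ)) := by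
            apply mul_le_mul_of_nonneg_left e3 (le_of_lt (Real.exp_pos _))
        _ = Real.exp ((r:ℝ) * Real.log (2*(c:ℝ)) + (-(ε/4)) * (k:ℝ)) := by
            rw [← Real.exp_add]
        _ ≤ Real.exp (-2) := Real.exp_le_exp.2 hexpo
        _ ≤ 1/3 := hinv
    -- assemble the final count
    have hdesc : ((n.descFactorial k : ℕ):ℝ) = ((n.choose k : ℕ):ℝ) * ((k.factorial : ℕ):ℝ) := by
      rw [Nat.descFactorial_eq_factorial_mul_choose]
      push_cast
      ring
    have hkfac : (0:ℝ) < ((k.factorial : ℕ):ℝ) := by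
      exact_mod_cast k.factorial_pos
    have hchoose0 : (0:ℝ) ≤ ((n.choose k : ℕ):ℝ) := Nat.cast_nonneg _
    have hCSle : ((((Finset.univ : Finset V).powersetCard k).filter
        (fun π : Finset V => (G.induce (↑π : Set V)).Colorable c)).card : ℝ)
        ≤ 1/3 * ((n.choose k : ℕ):ℝ) := by
      rw [hdesc] at hcore
      have hwk : (c:ℝ)^r * 2^r * (1-ε/4)^k * (((n.choose k : ℕ):ℝ) * ((k.factorial : ℕ):ℝ))
          ≤ 1/3 * (((n.choose k : ℕ):ℝ) * ((k.factorial : ℕ):ℝ)) := by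
        apply mul_le_mul_of_nonneg_right hfinal
        positivity
      have hfin2 := le_trans hcore hwk
      nlinarith [hfin2, hkfac]
    have hsplitc := Finset.card_filter_add_card_filter_not
      (s := (Finset.univ : Finset V).powersetCard k)
      (p := fun π : Finset V => (G.induce (↑π : Set V)).Colorable c)
    have htot : (((Finset.univ : Finset V).powersetCard k).card : ℝ) = ((n.choose k : ℕ):ℝ) := by
      rw [Finset.card_powersetCard, Finset.card_univ, ← hn]
    have hsplitR : ((((Finset.univ : Finset V).powersetCard k).filter
        (fun π : Finset V => (G.induce (↑π : Set V)).Colorable c)).card : ℝ)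
        + ((((Finset.univ : Finset V).powersetCard k).filter
        (fun π : Finset V => ¬ (G.induce (↑π : Set V)).Colorable c)).card : ℝ)
        = (((Finset.univ : Finset V).powersetCard k).card : ℝ) := by
      exact_mod_cast hsplitc
    rw [ge_iff_le]
    rw [htot] at hsplitR ⊢
    linarith [hCSle, hsplitR]
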